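/- Assume E = ℂⁿ and Φ, Ψ ∈ L^∞_{B(E)}(𝕋) (n×n matrix-valued bounded symbols). Suppose there exists an n×n complex matrix A with all entries of modulus at most 1 such that Φ(I−A) ∈ H^∞_{B(E)} and AΨ ∈ H^∞_{B(E)}. Then the product of the block Hankel operator H_Φ and the block Toeplitz operator T_Ψ on H²_E satisfies H_Φ T_Ψ = H_{ΦAΨ}; in particular H_Φ T_Ψ is a block Hankel operator. -/

import Mathlib

noncomputable section

/- We model the `ℂⁿ`-valued `L²` space of the circle as an abstract complex Hilbert space `H`
with Hilbert basis `b : ℤ × Fin n → H` (the functions `z^k eᵢ`).  `H²_E` is the closed span of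
`b (k, i)`, `k ≥ 0`, with Riesz projection `P`.  The (scalar) bilateral shift `W` satisfies
`W (b (k,i)) = b (k+1, i)`; a bounded operator represents multiplication by a `B(E)`-valued
`L^∞` function iff it commutes with `W`.  The flip `J` satisfies `J (b (k,i)) = b (−k−1, i)`.
A constant matrix `A` acts as the operator `M_A` with `M_A (b (k,i)) = ∑_j A_{ji} b (k,j)`.
Membership in `H^∞_{B(E)}` means the multiplication operator leaves `H²_E` invariant.
For `h ∈ H²_E`: `T_Ψ h = P(M_Ψ h)` and `H_Φ h = P(J(M_Φ h))`. -/

noncomputable def hardyE {H : Type*} [NormedAddCommGroup H] [InnerProductSpace ℂ H]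
    [CompleteSpace H] {n : ℕ} (b : HilbertBasis (ℤ × Fin n) ℂ H) : Submodule ℂ H :=
  (Submodule.span ℂ (Set.range fun p : ℕ × Fin n => b ((p.1 : ℤ), p.2))).topologicalClosure

noncomputable def hardyProjE {H : Type*} [NormedAddCommGroup H] [InnerProductSpace ℂ H]
    [CompleteSpace H] {n : ℕ} (b : HilbertBasis (ℤ × Fin n) ℂ H) : H →L[ℂ] H :=
  haveI : CompleteSpace (hardyE b) :=
    (Submodule.isClosed_topologicalClosure _).completeSpace_coe
  (hardyE b).subtypeL.comp ((hardyE b).orthogonalProjectionOnto)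

section aux

variable {H : Type*} [NormedAddCommGroup H] [InnerProductSpace ℂ H] [CompleteSpace H]
  {n : ℕ} (b : HilbertBasis (ℤ × Fin n) ℂ H)

/-- A continuous linear map sending the analytic basis vectors into a closed submodule `K`
maps all of `hardyE b` into `K`. -/
lemma aux_maps_hardy (K : Submodule ℂ H) (hK : IsClosed (K : Set H)) (T : H →L[ℂ] H)
    (hT : ∀ (k : ℕ) (i : Fin n), T (b ((k : ℤ), i)) ∈ K) :
    ∀ x ∈ hardyE b, T x ∈ K := by
  intro x hx
  have hle : hardyE b ≤ K.comap (T : H →ₗ[ℂ] H) := by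
    apply Submodule.topologicalClosure_minimal
    · rw [Submodule.span_le]
      rintro _ ⟨p, rfl⟩
      exact hT p.1 p.2
    · exact hK.preimage T.continuous
  exact hle hx

lemma aux_basis_mem (k : ℕ) (i : Fin n) : b ((k : ℤ), i) ∈ hardyE b :=
  Submodule.le_topologicalClosure _ (Submodule.subset_span ⟨(k, i), rfl⟩)

lemma aux_neg_mem_orth (m : ℤ) (hm : m < 0) (i : Fin n) : b (m, i) ∈ (hardyE b)ᗮ := by
  rw [Submodule.mem_orthogonal']
  intro u hu
  have hle : hardyE b ≤ LinearMap.ker ((innerSL ℂ (b (m, i))) : H →ₗ[ℂ] ℂ) := by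
    apply Submodule.topologicalClosure_minimal
    · rw [Submodule.span_le]
      rintro _ ⟨p, rfl⟩
      have hne : (m, i) ≠ ((p.1 : ℤ), p.2) := by
        intro hcontra
        have : m = (p.1 : ℤ) := (Prod.mk.injEq _ _ _ _ ▸ hcontra).1
        omega
      simpa [LinearMap.mem_ker] using b.orthonormal.2 hne
    · exact ContinuousLinearMap.isClosed_ker _
  exact hle hu

lemma aux_adjoint_MA (MA : H →L[ℂ] H) (A : Matrix (Fin n) (Fin n) ℂ)
    (hMA : ∀ (k : ℤ) (i : Fin n), MA (b (k, i)) = ∑ j : Fin n, A j i • b (k, j))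
    (k : ℤ) (j : Fin n) :
    (ContinuousLinearMap.adjoint MA) (b (k, j)) =
      ∑ i : Fin n, (starRingEnd ℂ) (A j i) • b (k, i) := by
  apply b.repr.injective
  apply lp.ext
  funext p
  obtain ⟨m, l⟩ := p
  have hb := orthonormal_iff_ite.mp b.orthonormal
  rw [b.repr_apply_apply, b.repr_apply_apply, ContinuousLinearMap.adjoint_inner_right,
    hMA m l]
  simp only [sum_inner, inner_sum, inner_smul_left, inner_smul_right, hb]
  by_cases hmk : m = k
  · subst hmk
    simp [Prod.ext_iff]
  · simp [Prod.ext_iff, hmk]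

end aux

/-- if there is a matrix `A` with entries of modulus at most `1` such that
`Φ(I−A) ∈ H^∞_{B(E)}` and `AΨ ∈ H^∞_{B(E)}`, then `H_Φ T_Ψ = H_{ΦAΨ}`; in particular
`H_Φ T_Ψ` is a block Hankel operator. -/
theorem stmt17 {H : Type*} [NormedAddCommGroup H] [InnerProductSpace ℂ H] [CompleteSpace H]
    (n : ℕ) (b : HilbertBasis (ℤ × Fin n) ℂ H)
    (W J MΦ MΨ MA : H →L[ℂ] H) (A : Matrix (Fin n) (Fin n) ℂ)
    (hW : ∀ (k : ℤ) (i : Fin n), W (b (k, i)) = b (k + 1, i))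
    (hJ : ∀ (k : ℤ) (i : Fin n), J (b (k, i)) = b (-k - 1, i))
    -- `MΦ`, `MΨ` are multiplication operators by `L^∞` matrix symbols `Φ`, `Ψ`:
    (hΦ : MΦ ∘L W = W ∘L MΦ)
    (hΨ : MΨ ∘L W = W ∘L MΨ)
    -- `MA` is multiplication by the constant matrix `A`:
    (hMA : ∀ (k : ℤ) (i : Fin n), MA (b (k, i)) = ∑ j : Fin n, A j i • b (k, j))
    -- entries of `A` have modulus at most 1:
    (hA : ∀ i j, ‖A i j‖ ≤ 1)
    -- `Φ(I−A) ∈ H^∞_{B(E)}`: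
    (hΦA : ∀ h ∈ hardyE b, MΦ (h - MA h) ∈ hardyE b)
    -- `AΨ ∈ H^∞_{B(E)}`:
    (hAΨ : ∀ h ∈ hardyE b, MA (MΨ h) ∈ hardyE b) :
    ∀ h ∈ hardyE b,
      hardyProjE b (J (MΦ (hardyProjE b (MΨ h)))) =
        hardyProjE b (J (MΦ (MA (MΨ h)))) := by
  intro h hh
  haveI : CompleteSpace (hardyE b) :=
    (Submodule.isClosed_topologicalClosure _).completeSpace_coe
  set g := MΨ h with hg
  -- basic facts about the projection
  have hPmem : ∀ x : H, hardyProjE b x ∈ hardyE b := by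
    intro x
    simp only [hardyProjE, ContinuousLinearMap.comp_apply, Submodule.subtypeL_apply]
    exact Submodule.coe_mem _
  have hPsub : ∀ x : H, x - hardyProjE b x ∈ (hardyE b)ᗮ := by
    intro x
    simp only [hardyProjE, ContinuousLinearMap.comp_apply, Submodule.subtypeL_apply]
    exact (hardyE b).sub_starProjection_mem_orthogonal x
  have hPJ0 : ∀ y ∈ (hardyE b)ᗮ, hardyProjE b y = 0 := by
    intro y hy
    simp only [hardyProjE, ContinuousLinearMap.comp_apply, Submodule.subtypeL_apply]
    rw [Submodule.orthogonalProjectionOnto_apply_of_mem_orthogonal hy]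
    rfl
  -- J maps H² into (H²)ᗮ
  have hJmaps : ∀ x ∈ hardyE b, J x ∈ (hardyE b)ᗮ := by
    apply aux_maps_hardy b _ (Submodule.isClosed_orthogonal _)
    intro k i
    rw [hJ]
    exact aux_neg_mem_orth b _ (by omega) i
  -- MA maps H² into H²
  have hMAmaps : ∀ x ∈ hardyE b, MA x ∈ hardyE b := by
    apply aux_maps_hardy b _ (Submodule.isClosed_topologicalClosure _)
    intro k i
    rw [hMA]
    exact Submodule.sum_mem _ fun j _ => Submodule.smul_mem _ _ (aux_basis_mem b k j)
  -- adjoint of MA maps H² into H²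
  have hNmaps : ∀ x ∈ hardyE b, (ContinuousLinearMap.adjoint MA) x ∈ hardyE b := by
    apply aux_maps_hardy b _ (Submodule.isClosed_topologicalClosure _)
    intro k i
    rw [aux_adjoint_MA b MA A hMA]
    exact Submodule.sum_mem _ fun j _ => Submodule.smul_mem _ _ (aux_basis_mem b k j)
  -- hence MA maps (H²)ᗮ into (H²)ᗮ
  have hMAorth : ∀ x ∈ (hardyE b)ᗮ, MA x ∈ (hardyE b)ᗮ := by
    intro x hx
    rw [Submodule.mem_orthogonal']
    intro u hu
    rw [← ContinuousLinearMap.adjoint_inner_right]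
    exact (Submodule.mem_orthogonal' _ _).mp hx _ (hNmaps u hu)
  -- the antianalytic part of g is killed by MA
  have h1 : MA (g - hardyProjE b g) ∈ (hardyE b)ᗮ := hMAorth _ (hPsub g)
  have h2 : MA (g - hardyProjE b g) ∈ hardyE b := by
    rw [map_sub]
    exact Submodule.sub_mem _ (hAΨ h hh) (hMAmaps _ (hPmem g))
  have h0 : MA (g - hardyProjE b g) = 0 :=
    inner_self_eq_zero.mp ((Submodule.mem_orthogonal' _ _).mp h1 _ h2)
  have hMAg : MA g = MA (hardyProjE b g) := by
    rw [map_sub, sub_eq_zero] at h0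
    exact h0
  rw [hMAg]
  -- now both arguments are built from P g ∈ H², and Φ(I−A) analytic finishes the proof
  have key : MΦ (hardyProjE b g - MA (hardyProjE b g)) ∈ hardyE b := hΦA _ (hPmem g)
  have hz : hardyProjE b (J (MΦ (hardyProjE b g - MA (hardyProjE b g)))) = 0 :=
    hPJ0 _ (hJmaps _ key)
  rw [map_sub, map_sub, map_sub, sub_eq_zero] at hz
  exact hz
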